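/- arXiv:2401.09390 — 4 statements merged into one kernel-verified Lean document; each statement's English description precedes it below -/
import Mathlib

section
/- For q ∈ (0,1), an integer α ≥ 2, and nonnegative integer k, the function g(k) := [k+1]_q - (q^k [k+1]_q)^{1/α} is strictly increasing in k; more precisely, g(k+1) - g(k) ≥ q^{k+1}(1 - q^{k/α}/H) > 0, where H := Σ_{i=0}^{α-1} ([k+2]_q^{α-1-i} [k+1]_q^{i})^{1/α}. -/
noncomputable def qint (q : ℝ) (n : ℕ) : ℝ := ∑ i ∈ Finset.range n, q ^ i

set_option maxHeartbeats 1000000 in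
theorem stmt_6 (q : ℝ) (hq0 : 0 < q) (hq1 : q < 1) (α : ℕ) (hα : 2 ≤ α) (k : ℕ) :
    (qint q (k + 2) - (q ^ (k + 1) * qint q (k + 2)) ^ ((1 : ℝ) / α)) -
        (qint q (k + 1) - (q ^ k * qint q (k + 1)) ^ ((1 : ℝ) / α)) ≥
      q ^ (k + 1) * (1 - q ^ ((k : ℝ) / α) /
        (∑ i ∈ Finset.range α,
          (qint q (k + 2) ^ (α - 1 - i) * qint q (k + 1) ^ i) ^ ((1 : ℝ) / α))) ∧
    q ^ (k + 1) * (1 - q ^ ((k : ℝ) / α) /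
        (∑ i ∈ Finset.range α,
          (qint q (k + 2) ^ (α - 1 - i) * qint q (k + 1) ^ i) ^ ((1 : ℝ) / α))) > 0 := by
  have hα0 : (α : ℝ) ≠ 0 := by positivity
  set a := qint q (k + 2) with ha_def
  set b := qint q (k + 1) with hb_def
  have hqint_one : ∀ n : ℕ, 1 ≤ qint q (n + 1) := by
    intro n
    unfold qint
    rw [Finset.sum_range_succ']
    have : (0:ℝ) ≤ ∑ i ∈ Finset.range n, q ^ (i + 1) := by positivity
    simpa using this
  have hb1 : (1:ℝ) ≤ b := hqint_one k
  have ha1 : (1:ℝ) ≤ a := hqint_one (k + 1)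
  have hb0 : (0:ℝ) < b := lt_of_lt_of_le one_pos hb1
  have ha0 : (0:ℝ) < a := lt_of_lt_of_le one_pos ha1
  have hab : a - b = q ^ (k + 1) := by
    rw [ha_def, hb_def]
    unfold qint
    rw [Finset.sum_range_succ]
    ring
  set x := a ^ ((1:ℝ)/α) with hx_def
  set y := b ^ ((1:ℝ)/α) with hy_def
  have hx0 : 0 < x := Real.rpow_pos_of_pos ha0 _
  have hy0 : 0 < y := Real.rpow_pos_of_pos hb0 _
  have hxa : x ^ α = a := by
    rw [hx_def, ← Real.rpow_natCast (a ^ ((1:ℝ)/α)) α, ← Real.rpow_mul ha0.le]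
    rw [one_div_mul_cancel hα0, Real.rpow_one]
  have hyb : y ^ α = b := by
    rw [hy_def, ← Real.rpow_natCast (b ^ ((1:ℝ)/α)) α, ← Real.rpow_mul hb0.le]
    rw [one_div_mul_cancel hα0, Real.rpow_one]
  -- the sum H
  set H := ∑ i ∈ Finset.range α, (a ^ (α - 1 - i) * b ^ i) ^ ((1:ℝ)/α) with hH_def
  have hHterm : ∀ i : ℕ, (a ^ (α - 1 - i) * b ^ i) ^ ((1:ℝ)/α) = y ^ i * x ^ (α - 1 - i) := by
    intro i
    rw [Real.mul_rpow (by positivity) (by positivity)]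
    rw [← Real.rpow_natCast a (α - 1 - i), ← Real.rpow_natCast b i,
      ← Real.rpow_mul ha0.le, ← Real.rpow_mul hb0.le, mul_one_div, mul_one_div,
      hx_def, hy_def, ← Real.rpow_natCast (a ^ ((1:ℝ)/α)) (α - 1 - i),
      ← Real.rpow_natCast (b ^ ((1:ℝ)/α)) i, ← Real.rpow_mul ha0.le, ← Real.rpow_mul hb0.le]
    rw [mul_comm]
    ring_nf
  have hHsum : H = ∑ i ∈ Finset.range α, y ^ i * x ^ (α - 1 - i) := by
    rw [hH_def]; exact Finset.sum_congr rfl fun i _ => hHterm i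
  have hHxy : H * (y - x) = b - a := by
    rw [hHsum, geom_sum₂_mul, hyb, hxa]
  have hHge : (α : ℝ) ≤ H := by
    rw [hHsum]
    calc (α : ℝ) = ∑ _i ∈ Finset.range α, (1:ℝ) := by simp
    _ ≤ _ := Finset.sum_le_sum fun i _ => by
        have h1 : (1:ℝ) ≤ y ^ i := one_le_pow₀ (Real.one_le_rpow hb1 (by positivity))
        have h2 : (1:ℝ) ≤ x ^ (α - 1 - i) := one_le_pow₀ (Real.one_le_rpow ha1 (by positivity))
        nlinarith
  have hH1 : (1:ℝ) < H := lt_of_lt_of_le (by exact_mod_cast Nat.lt_of_lt_of_le one_lt_two hα) hHge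
  have hH0 : (0:ℝ) < H := lt_trans one_pos hH1
  have hqk1 : q ^ ((k:ℝ)/α) ≤ 1 :=
    Real.rpow_le_one hq0.le hq1.le (by positivity)
  have hfrac : q ^ ((k:ℝ)/α) / H < 1 := by
    rw [div_lt_one hH0]; exact lt_of_le_of_lt hqk1 hH1
  have hxy : x - y = q ^ (k + 1) / H := by
    have h' : H * (x - y) = a - b := by nlinarith [hHxy]
    rw [eq_div_iff hH0.ne']
    nlinarith [h', hab]
  constructor
  · -- main inequality
    have hqkb : (q ^ k * b) ^ ((1:ℝ)/α) = q ^ ((k:ℝ)/α) * y := by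
      rw [Real.mul_rpow (by positivity) hb0.le, ← Real.rpow_natCast q k,
        ← Real.rpow_mul hq0.le, mul_one_div, hy_def]
    have hmono : (q ^ (k+1) * a) ^ ((1:ℝ)/α) ≤ q ^ ((k:ℝ)/α) * x := by
      have h1 : (q ^ (k+1) * a) ≤ q ^ k * a := by
        have : q ^ (k+1) ≤ q ^ k := pow_le_pow_of_le_one hq0.le hq1.le (Nat.le_succ k)
        nlinarith
      calc (q ^ (k+1) * a) ^ ((1:ℝ)/α) ≤ (q ^ k * a) ^ ((1:ℝ)/α) :=
            Real.rpow_le_rpow (by positivity) h1 (by positivity)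
        _ = q ^ ((k:ℝ)/α) * x := by
            rw [Real.mul_rpow (by positivity) ha0.le, ← Real.rpow_natCast q k,
              ← Real.rpow_mul hq0.le, mul_one_div, hx_def]
    rw [ge_iff_le, mul_sub, mul_one]
    have key : q ^ (k+1) * (q ^ ((k:ℝ)/α) / H) = q ^ ((k:ℝ)/α) * (x - y) := by
      rw [hxy]; ring
    have : (q ^ (k + 1) * a) ^ ((1:ℝ)/α) - (q ^ k * b) ^ ((1:ℝ)/α)
        ≤ q ^ ((k:ℝ)/α) * (x - y) := by
      rw [hqkb, mul_sub]
      linarith [hmono]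
    linarith [hab, this, key.ge]
  · have : 0 < 1 - q ^ ((k:ℝ)/α) / H := by linarith
    positivity
end

section
/- Let q ∈ (0,1), n a positive integer, and j ∈ {0,1,...,n-1}. Then [j+1]_q/[n]_q - [j]_q/[n+1]_q = ([j+1]_q[n+1]_q - [j]_q[n]_q)/([n]_q[n+1]_q) ≤ 3/[n+1]_q. -/
lemma qint_pos (q : ℝ) (hq0 : 0 < q) (n : ℕ) (hn : 1 ≤ n) : 0 < qint q n := by
  unfold qint
  apply Finset.sum_pos (fun i _ => pow_pos hq0 i)
  exact ⟨0, Finset.mem_range.mpr hn⟩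

lemma qint_mono (q : ℝ) (hq0 : 0 < q) {m n : ℕ} (h : m ≤ n) : qint q m ≤ qint q n := by
  unfold qint
  exact Finset.sum_le_sum_of_subset_of_nonneg (Finset.range_subset_range.mpr h)
    (fun i _ _ => le_of_lt (pow_pos hq0 i))

theorem stmt_12 (q : ℝ) (hq0 : 0 < q) (hq1 : q < 1) (n : ℕ) (hn : 1 ≤ n)
    (j : ℕ) (hj : j ≤ n - 1) :
    qint q (j + 1) / qint q n - qint q j / qint q (n + 1) =
      (qint q (j + 1) * qint q (n + 1) - qint q j * qint q n) /
        (qint q n * qint q (n + 1)) ∧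
    (qint q (j + 1) * qint q (n + 1) - qint q j * qint q n) /
        (qint q n * qint q (n + 1)) ≤ 3 / qint q (n + 1) := by
  have hjn : j + 1 ≤ n := by omega
  have hN : 0 < qint q n := qint_pos q hq0 n hn
  have hN1 : 0 < qint q (n + 1) := qint_pos q hq0 (n + 1) (by omega)
  have hJ1 : qint q (j + 1) ≤ qint q n := qint_mono q hq0 hjn
  have hsplitn : qint q (n + 1) = qint q n + q ^ n := by
    unfold qint; rw [Finset.sum_range_succ]
  have hsplitj : qint q (j + 1) = qint q j + q ^ j := by
    unfold qint; rw [Finset.sum_range_succ]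
  have hqn : q ^ n ≤ 1 := pow_le_one₀ hq0.le hq1.le
  have hqj : q ^ j ≤ 1 := pow_le_one₀ hq0.le hq1.le
  have hJ0 : 0 ≤ qint q j := by
    unfold qint; exact Finset.sum_nonneg fun i _ => (pow_pos hq0 i).le
  have hNone : 1 ≤ qint q n := by
    have := qint_mono q hq0 hn
    simpa [qint] using this
  constructor
  · rw [div_sub_div _ _ hN.ne' hN1.ne']; ring_nf
  · rw [div_le_div_iff₀ (by positivity) hN1]
    have key : qint q (j + 1) * qint q (n + 1) - qint q j * qint q n ≤ 3 * qint q n := by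
      nlinarith [pow_pos hq0 n, pow_pos hq0 j]
    nlinarith
end

section
/- Let q ∈ (0,1], n a positive integer, α ≥ 2 an integer, and j, k nonnegative integers with j+2 ≤ k ≤ n and k ≥ α. If [k+1]_q - (q^k[k+1]_q)^{1/α} < [j+1]_q, then [k]_q/[n+1]_q - [j]_q/[n+1]_q ≤ (q^{k-α}[k+1]_q)^{1/α}/[n+1]_q ≤ 1/[n+1]_q^{1-1/α}. -/
theorem stmt_13 (q : ℝ) (hq0 : 0 < q) (hq1 : q ≤ 1) (n : ℕ) (hn : 1 ≤ n)
    (α : ℕ) (hα : 2 ≤ α) (j k : ℕ) (hjk : j + 2 ≤ k) (hkn : k ≤ n) (hkα : α ≤ k)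
    (h : qint q (k + 1) - (q ^ k * qint q (k + 1)) ^ ((1 : ℝ) / α) < qint q (j + 1)) :
    qint q k / qint q (n + 1) - qint q j / qint q (n + 1) ≤
      (q ^ (k - α) * qint q (k + 1)) ^ ((1 : ℝ) / α) / qint q (n + 1) ∧
    (q ^ (k - α) * qint q (k + 1)) ^ ((1 : ℝ) / α) / qint q (n + 1) ≤
      1 / qint q (n + 1) ^ (1 - (1 : ℝ) / α) := by
  have hqn : 0 < qint q (n + 1) := by
    apply Finset.sum_pos (fun i _ => by positivity)
    exact Finset.nonempty_range_iff.mpr (Nat.succ_ne_zero n)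
  have hk1 : 0 < qint q (k + 1) := by
    apply Finset.sum_pos (fun i _ => by positivity)
    exact Finset.nonempty_range_iff.mpr (Nat.succ_ne_zero k)
  have hmono : qint q (k + 1) ≤ qint q (n + 1) :=
    Finset.sum_le_sum_of_subset_of_nonneg
      (Finset.range_subset_range.mpr (by omega)) (fun i _ _ => by positivity)
  have hqk : q ^ k ≤ q ^ (k - α) := pow_le_pow_of_le_one hq0.le hq1 (by omega)
  have h1 : (q ^ k * qint q (k + 1)) ^ ((1 : ℝ) / α) ≤
      (q ^ (k - α) * qint q (k + 1)) ^ ((1 : ℝ) / α) :=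
    Real.rpow_le_rpow (by positivity) (mul_le_mul_of_nonneg_right hqk hk1.le)
      (by positivity)
  have hqjk : q ^ k ≤ q ^ j := pow_le_pow_of_le_one hq0.le hq1 (by omega)
  have hα0 : (α : ℝ) ≠ 0 := by positivity
  have epow : (q ^ α : ℝ) ^ ((1 : ℝ) / α) = q := by
    rw [← Real.rpow_natCast q α, ← Real.rpow_mul hq0.le, mul_one_div, div_self hα0,
      Real.rpow_one]
  have eA : (q ^ k * qint q (k + 1)) ^ ((1 : ℝ) / α)
      = q * (q ^ (k - α) * qint q (k + 1)) ^ ((1 : ℝ) / α) := by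
    rw [show q ^ k = q ^ α * q ^ (k - α) by rw [← pow_add]; congr 1; omega,
      mul_assoc, Real.mul_rpow (by positivity) (by positivity), epow]
  have ek : qint q (k + 1) = q * qint q k + 1 := geom_sum_succ
  have ej : qint q (j + 1) = q * qint q j + 1 := geom_sum_succ
  have hkey : qint q k - qint q j ≤ (q ^ (k - α) * qint q (k + 1)) ^ ((1 : ℝ) / α) := by
    rw [eA] at h
    have h3 : q * (qint q k - qint q j)
        < q * ((q ^ (k - α) * qint q (k + 1)) ^ ((1 : ℝ) / α)) := by
      rw [mul_sub]; linarith [ek, ej, h]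
    exact ((mul_lt_mul_iff_right₀ hq0).mp h3).le
  constructor
  · rw [div_sub_div_same]
    exact div_le_div_of_nonneg_right hkey hqn.le |>.trans_eq rfl
  · have h2 : (q ^ (k - α) * qint q (k + 1)) ^ ((1 : ℝ) / α) ≤
        qint q (n + 1) ^ ((1 : ℝ) / α) := by
      apply Real.rpow_le_rpow (by positivity) _ (by positivity)
      calc q ^ (k - α) * qint q (k + 1) ≤ 1 * qint q (k + 1) :=
            mul_le_mul_of_nonneg_right (pow_le_one₀ hq0.le hq1) hk1.le
        _ = qint q (k + 1) := one_mul _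
        _ ≤ qint q (n + 1) := hmono
    have hr : 0 < qint q (n + 1) ^ (1 - (1 : ℝ) / α) := Real.rpow_pos_of_pos hqn _
    rw [div_le_div_iff₀ hqn hr, one_mul]
    calc (q ^ (k - α) * qint q (k + 1)) ^ ((1 : ℝ) / α) * qint q (n + 1) ^ (1 - (1 : ℝ) / α)
        ≤ qint q (n + 1) ^ ((1 : ℝ) / α) * qint q (n + 1) ^ (1 - (1 : ℝ) / α) :=
          mul_le_mul_of_nonneg_right h2 hr.le
      _ = qint q (n + 1) := by
          rw [← Real.rpow_add hqn, add_sub_cancel, Real.rpow_one]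
end

section
/- Let q ∈ (0,1), n a positive integer, j, k ∈ {0,1,...,n} with k ≥ j+2, and x ∈ [[j]_q/[n+1]_q, [j+1]_q/[n+1]_q]. Then with M_{k,n,j}(x;q) = p_{n,k}(x;q)([k]_q/[n]_q - x)/p_{n,j}(x;q) and \overline{M}_{k,n,j}(x;q) = p_{n,k}(x;q)([k]_q/[n+1]_q - x)/p_{n,j}(x;q), we have \overline{M}_{k,n,j}(x;q) ≤ M_{k,n,j}(x;q) ≤ (1 + 2/q^{n+1})·\overline{M}_{k,n,j}(x;q). -/
noncomputable def qfact (q : ℝ) : ℕ → ℝ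
  | 0 => 1
  | n + 1 => qfact q n * qint q (n + 1)

noncomputable def qbinom (q : ℝ) (n k : ℕ) : ℝ := qfact q n / (qfact q k * qfact q (n - k))

noncomputable def qBern (q : ℝ) (n k : ℕ) (x : ℝ) : ℝ :=
  qbinom q n k * x ^ k * ∏ s ∈ Finset.range (n - k), (1 - q ^ s * x)

lemma qint_nonneg {q : ℝ} (hq : 0 ≤ q) (m : ℕ) : 0 ≤ qint q m :=
  Finset.sum_nonneg fun i _ => pow_nonneg hq i

lemma qint_pos_s15 {q : ℝ} (hq : 0 < q) {m : ℕ} (hm : 1 ≤ m) : 0 < qint q m :=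
  Finset.sum_pos (fun i _ => pow_pos hq i) (by simp; omega)

lemma qint_mono_s15 {q : ℝ} (hq : 0 ≤ q) {a b : ℕ} (h : a ≤ b) : qint q a ≤ qint q b :=
  Finset.sum_le_sum_of_subset_of_nonneg (Finset.range_subset_range.2 h)
    (fun i _ _ => pow_nonneg hq i)

lemma qint_succ (q : ℝ) (m : ℕ) : qint q (m + 1) = qint q m + q ^ m := by
  simp [qint, Finset.sum_range_succ]

lemma qint_strict_mono {q : ℝ} (hq : 0 < q) {a b : ℕ} (h : a < b) : qint q a < qint q b := by
  have h1 : qint q (a + 1) ≤ qint q b := qint_mono_s15 hq.le h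
  have h2 := qint_succ q a
  nlinarith [pow_pos hq a]

lemma qfact_pos {q : ℝ} (hq : 0 < q) (m : ℕ) : 0 < qfact q m := by
  induction m with
  | zero => norm_num [qfact]
  | succ n ih => exact mul_pos ih (qint_pos_s15 hq (Nat.succ_le_succ (Nat.zero_le n)))

lemma qbinom_pos {q : ℝ} (hq : 0 < q) (n k : ℕ) : 0 < qbinom q n k :=
  div_pos (qfact_pos hq n) (mul_pos (qfact_pos hq k) (qfact_pos hq _))

theorem stmt_15 (q : ℝ) (hq0 : 0 < q) (hq1 : q < 1) (n : ℕ) (hn : 1 ≤ n)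
    (j k : ℕ) (hj : j ≤ n) (hk : k ≤ n) (hjk : j + 2 ≤ k) (x : ℝ)
    (hx : x ∈ Set.Icc (qint q j / qint q (n + 1)) (qint q (j + 1) / qint q (n + 1))) :
    qBern q n k x * (qint q k / qint q (n + 1) - x) / qBern q n j x ≤
      qBern q n k x * (qint q k / qint q n - x) / qBern q n j x ∧
    qBern q n k x * (qint q k / qint q n - x) / qBern q n j x ≤
      (1 + 2 / q ^ (n + 1)) *
        (qBern q n k x * (qint q k / qint q (n + 1) - x) / qBern q n j x) := by
  obtain ⟨hxl, hxr⟩ := hx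
  have hN1 : (0:ℝ) < qint q (n+1) := qint_pos_s15 hq0 (by omega)
  have hN : (0:ℝ) < qint q n := qint_pos_s15 hq0 hn
  have hx0 : 0 ≤ x := le_trans (div_nonneg (qint_nonneg hq0.le j) hN1.le) hxl
  have hx1 : x < 1 := by
    have h1 : qint q (j+1) < qint q (n+1) := qint_strict_mono hq0 (by omega)
    calc x ≤ qint q (j+1) / qint q (n+1) := hxr
      _ < 1 := (div_lt_one hN1).2 h1
  have hfac : ∀ s : ℕ, 0 < 1 - q ^ s * x := by
    intro s
    have hqs : q ^ s ≤ 1 := pow_le_one₀ hq0.le hq1.le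
    nlinarith
  have hBj : 0 < qBern q n j x := by
    have hxj : 0 < x ^ j := by
      rcases Nat.eq_zero_or_pos j with h | h
      · simp [h]
      · exact pow_pos (lt_of_lt_of_le (div_pos (qint_pos_s15 hq0 h) hN1) hxl) j
    exact mul_pos (mul_pos (qbinom_pos hq0 n j) hxj)
      (Finset.prod_pos fun s _ => hfac s)
  have hBk : 0 ≤ qBern q n k x :=
    mul_nonneg (mul_nonneg (qbinom_pos hq0 n k).le (pow_nonneg hx0 k))
      (Finset.prod_nonneg fun s _ => (hfac s).le)
  -- numeric core
  have hKN : qint q k ≤ qint q n := qint_mono_s15 hq0.le hk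
  have hK0 : 0 ≤ qint q k := qint_nonneg hq0.le k
  have hNN1 : qint q n ≤ qint q (n+1) := qint_mono_s15 hq0.le (by omega)
  have hjk1 : qint q (j+1) ≤ qint q k := qint_mono_s15 hq0.le (by omega)
  -- a ≥ q^(n-1)/N1
  have hlow : q ^ (n-1) / qint q (n+1) ≤ qint q k / qint q (n+1) - x := by
    have h1 : qint q (j+1) + q ^ (k-1) ≤ qint q k := by
      have h2 : qint q (j+1) ≤ qint q (k-1) := qint_mono_s15 hq0.le (by omega)
      have h3 : qint q (k-1) + q ^ (k-1) = qint q k := by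
        have hk1 : k - 1 + 1 = k := by omega
        have := qint_succ q (k-1)
        rw [hk1] at this
        linarith
      linarith
    have h3 : q ^ (n-1) ≤ q ^ (k-1) :=
      pow_le_pow_of_le_one hq0.le hq1.le (by omega)
    have h4 : qint q (j+1) / qint q (n+1) ≤ (qint q k - q ^ (n-1)) / qint q (n+1) := by
      gcongr
      linarith
    have h5 : (qint q k - q ^ (n-1)) / qint q (n+1)
        = qint q k / qint q (n+1) - q ^ (n-1) / qint q (n+1) := by ring
    linarith
  have ha : 0 ≤ qint q k / qint q (n+1) - x := by
    have := div_nonneg (pow_nonneg hq0.le (n-1)) hN1.le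
    linarith
  have hab : qint q k / qint q (n+1) ≤ qint q k / qint q n := by gcongr
  -- difference bound
  have hdiff : qint q k / qint q n - qint q k / qint q (n+1) ≤ q ^ n / qint q (n+1) := by
    rw [div_sub_div _ _ hN.ne' hN1.ne', div_le_div_iff₀ (by positivity) hN1]
    have h6 : qint q k * qint q (n+1) - qint q n * qint q k = qint q k * q ^ n := by
      rw [qint_succ]; ring
    rw [h6]
    nlinarith [mul_nonneg (mul_nonneg (sub_nonneg.2 hKN) (pow_pos hq0 n).le) hN1.le]
  have hc : q ^ n / qint q (n+1) ≤ (2 / q ^ (n+1)) * (q ^ (n-1) / qint q (n+1)) := by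
    rw [div_mul_div_comm, div_le_div_iff₀ hN1 (by positivity)]
    have e1 : q ^ n = q ^ (n-1) * q := by
      rw [← pow_succ]; congr 1; omega
    have e2 : q ^ (n+1) = q ^ (n-1) * q ^ 2 := by
      rw [← pow_add]; congr 1; omega
    have e4 : (0:ℝ) < q ^ (n-1) := pow_pos hq0 _
    have e5 : q ^ (n+2) ≤ 1 := pow_le_one₀ hq0.le hq1.le
    have e6 : q ^ (n+2) = q ^ (n-1) * q ^ 3 := by
      rw [← pow_add]; congr 1; omega
    rw [e6] at e5
    rw [e1, e2]
    nlinarith [mul_nonneg (sub_nonneg.2 e5) (mul_pos e4 hN1).le, mul_pos e4 hN1]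
  have hcpos : (0:ℝ) ≤ 2 / q ^ (n+1) := by positivity
  have hkey : qint q k / qint q n - x ≤
      (1 + 2 / q ^ (n+1)) * (qint q k / qint q (n+1) - x) := by
    have h7 : (2 / q ^ (n+1)) * (q ^ (n-1) / qint q (n+1)) ≤
        (2 / q ^ (n+1)) * (qint q k / qint q (n+1) - x) :=
      mul_le_mul_of_nonneg_left hlow hcpos
    nlinarith
  -- assemble
  have rew : ∀ t : ℝ, qBern q n k x * t / qBern q n j x
      = t * (qBern q n k x / qBern q n j x) := fun t => by ring
  have hR : 0 ≤ qBern q n k x / qBern q n j x := div_nonneg hBk hBj.le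
  constructor
  · rw [rew, rew]
    exact mul_le_mul_of_nonneg_right (by linarith) hR
  · rw [rew, rew]
    calc (qint q k / qint q n - x) * (qBern q n k x / qBern q n j x)
        ≤ ((1 + 2 / q ^ (n+1)) * (qint q k / qint q (n+1) - x)) *
            (qBern q n k x / qBern q n j x) := mul_le_mul_of_nonneg_right hkey hR
      _ = (1 + 2 / q ^ (n+1)) *
            ((qint q k / qint q (n+1) - x) * (qBern q n k x / qBern q n j x)) := by ring
end
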